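/- arXiv:1902.08078 — 2 statements merged into one kernel-verified Lean document; each statement's English description precedes it below -/
import Mathlib

section
/- Let n ≥ 1 and let (d_k)_{k=0}^{n} be a positive, strictly increasing sequence (d_0 < d_1 < ⋯ < d_n) satisfying (2σ−1) d_n − σ d_{n−1} > 0 for some σ ∈ (1/2, 1). Then for any real numbers y^0, y^1, …, y^{n+1}: 2 (σ y^{n+1} + (1−σ) y^n) · Σ_{k=0}^{n} d_k (y^{k+1} − y^k) ≥ Σ_{k=0}^{n} d_k ((y^{k+1})² − (y^k)²). -/
open Finset

private lemma abel_sum (d a : ℕ → ℝ) : ∀ m : ℕ,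
    ∑ k ∈ range m, d k * (a k - a (k+1))
      = (∑ j ∈ range m, (d j - (if j = 0 then 0 else d (j-1))) * a j)
        - (if m = 0 then 0 else d (m-1) * a m)
  | 0 => by simp
  | (m+1) => by
    rw [sum_range_succ, abel_sum d a m, sum_range_succ]
    rcases Nat.eq_zero_or_pos m with h | h
    · subst h; simp; ring
    · have hm : m ≠ 0 := h.ne'
      simp only [hm, if_false, Nat.add_sub_cancel, Nat.succ_ne_zero]
      ring

private lemma sum_e (d : ℕ → ℝ) (m : ℕ) :
    ∑ j ∈ range m, (d j - (if j = 0 then 0 else d (j-1)))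
      = if m = 0 then 0 else d (m-1) := by
  have h := abel_sum d (fun _ => 1) m
  simp at h
  rw [Finset.sum_sub_distrib]
  linarith

theorem stmt_8 (n : ℕ) (hn : 1 ≤ n) (d : ℕ → ℝ) (σ : ℝ)
    (hσ : σ ∈ Set.Ioo (1/2 : ℝ) 1)
    (hpos : ∀ k ≤ n, 0 < d k)
    (hmono : ∀ k, k < n → d k < d (k+1))
    (hlast : 0 < (2*σ - 1) * d n - σ * d (n-1))
    (y : ℕ → ℝ) :
    2 * (σ * y (n+1) + (1-σ) * y n) * ∑ k ∈ Finset.range (n+1), d k * (y (k+1) - y k)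
      ≥ ∑ k ∈ Finset.range (n+1), d k * ((y (k+1))^2 - (y k)^2) := by
  obtain ⟨hσ1, hσ2⟩ := hσ
  obtain ⟨m, rfl⟩ : ∃ m, n = m + 1 := ⟨n - 1, (Nat.succ_pred_eq_of_pos hn).symm⟩
  simp only [Nat.add_sub_cancel] at hlast
  set Δ : ℝ := y (m+2) - y (m+1) with hΔ
  set w : ℝ := σ * Δ with hw
  set B : ℕ → ℝ := fun k => y (m+1) - y k with hB
  set a : ℕ → ℝ := fun k => B k ^ 2 + 2*w*B k with ha
  set e : ℕ → ℝ := fun j => d j - (if j = 0 then 0 else d (j-1)) with he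
  -- Step 1: the difference equals a weighted telescoping sum
  have h1 : 2 * (σ * y (m+1+1) + (1-σ) * y (m+1)) *
        (∑ k ∈ range (m+1+1), d k * (y (k+1) - y k))
      - (∑ k ∈ range (m+1+1), d k * ((y (k+1))^2 - (y k)^2))
      = ∑ k ∈ range (m+2), d k * (a k - a (k+1)) := by
    rw [Finset.mul_sum, ← Finset.sum_sub_distrib]
    apply Finset.sum_congr rfl
    intro k _
    simp only [ha, hB, hw, hΔ]
    ring
  -- Step 2: Abel summation
  have h2 : ∑ k ∈ range (m+2), d k * (a k - a (k+1))
      = (∑ j ∈ range (m+2), e j * a j) - d (m+1) * a (m+2) := by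
    rw [abel_sum d a (m+2)]
    simp [he]
  have hBn : B (m+1) = 0 := by simp [hB]
  have hBn1 : B (m+2) = -Δ := by simp only [hB, hΔ]; ring
  have h3 : ∑ j ∈ range (m+2), e j * a j = ∑ j ∈ range (m+1), e j * a j := by
    rw [sum_range_succ]
    simp [ha, hBn]
  have h4 : ∑ j ∈ range (m+1), e j * a j
      = (∑ j ∈ range (m+1), e j * (B j + w)^2) - d m * w^2 := by
    have : ∑ j ∈ range (m+1), e j * a j
        = ∑ j ∈ range (m+1), (e j * (B j + w)^2 - e j * w^2) := by
      apply Finset.sum_congr rfl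
      intro j _
      simp only [ha]
      ring
    rw [this, Finset.sum_sub_distrib, ← Finset.sum_mul]
    have := sum_e d (m+1)
    simp only [Nat.succ_ne_zero, if_false, Nat.add_sub_cancel] at this
    rw [← he] at this
    rw [this]
  have h5 : d (m+1) * a (m+2) = d (m+1) * (Δ^2 - 2*w*Δ) := by
    simp only [ha, hBn1]; ring
  -- nonnegativity of the sum of squares
  have hsum : 0 ≤ ∑ j ∈ range (m+1), e j * (B j + w)^2 := by
    apply Finset.sum_nonneg
    intro j hj
    apply mul_nonneg _ (sq_nonneg _)
    rcases Nat.eq_zero_or_pos j with h | h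
    · subst h
      simp only [he, if_pos]
      simpa using (hpos 0 (by omega)).le
    · have hj' : j - 1 < m + 1 := by
        have := Finset.mem_range.mp hj; omega
      have := hmono (j-1) hj'
      have hjj : j - 1 + 1 = j := by omega
      rw [hjj] at this
      simp only [he, h.ne', if_false]
      linarith
  -- nonnegativity of the remainder
  have hconst : 0 ≤ ((2*σ-1) * d (m+1) - σ^2 * d m) * Δ^2 := by
    have hdm : 0 < d m := hpos m (by omega)
    have hσd : σ^2 * d m ≤ σ * d m := by
      nlinarith [mul_nonneg (mul_nonneg hdm.le (by linarith : (0:ℝ) ≤ σ)) (by linarith : (0:ℝ) ≤ 1-σ)]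
    have hc : 0 < (2*σ-1) * d (m+1) - σ^2 * d m := by linarith
    exact mul_nonneg hc.le (sq_nonneg Δ)
  rw [ge_iff_le, ← sub_nonneg, h1, h2, h3, h4, h5]
  have : (∑ j ∈ range (m+1), e j * (B j + w)^2) - d m * w^2
      - d (m+1) * (Δ^2 - 2*w*Δ)
      = (∑ j ∈ range (m+1), e j * (B j + w)^2)
        + ((2*σ-1) * d (m+1) - σ^2 * d m) * Δ^2 := by
    simp only [hw]; ring
  rw [this]
  linarith
end

section
/- Let n ≥ 1, σ ∈ (1/2,1), and suppose the coefficients g_k^{(n+1)} (k = 0,…,n) and g_k^{(n)} (k = 0,…,n−1) satisfy g_k^{(n+1)} = g_{k−1}^{(n)} for 2 ≤ k ≤ n, and are positive, strictly increasing in k with (2σ−1) g_n^{(n+1)} − σ g_{n−1}^{(n+1)} > 0. Then for any real sequence v^{1−σ}, v^{2−σ}, …, v^{n+1−σ} and any reals v^{−σ}, F: 2(σ v^{n+1−σ} + (1−σ) v^{n−σ}) · [Σ_{k=0}^{n} g_k^{(n+1)} (v^{k+1−σ} − v^{k−σ}) − F] ≥ Σ_{k=0}^{n} g_k^{(n+1)}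 (v^{k+1−σ})² − Σ_{k=0}^{n−1} g_k^{(n)} (v^{k+1−σ})² − (g_1^{(n+1)} − g_0^{(n)}) (v^{1−σ})² − g_0^{(n+1)} (v^{−σ} + F/g_0^{(n+1)})². -/
lemma abel_aux (d a : ℕ → ℝ) (n : ℕ) :
    ∑ k ∈ Finset.range (n+1), d k * (a k - a (k+1))
      = d 0 * a 0 + (∑ k ∈ Finset.range n, (d (k+1) - d k) * a (k+1)) - d n * a (n+1) := by
  induction n with
  | zero => simp; ring
  | succ m ih =>
    rw [Finset.sum_range_succ, ih, Finset.sum_range_succ]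
    ring

lemma alikhanov (n : ℕ) (hn : 1 ≤ n) (σ : ℝ) (hσ : σ ∈ Set.Ioo (1/2 : ℝ) 1)
    (d : ℕ → ℝ) (hpos : ∀ k ≤ n, 0 < d k) (hmono : ∀ k, k < n → d k < d (k+1))
    (hlast : 0 < (2*σ - 1) * d n - σ * d (n-1)) (y : ℕ → ℝ) :
    2 * (σ * y (n+1) + (1-σ) * y n) * (∑ k ∈ Finset.range (n+1), d k * (y (k+1) - y k))
      ≥ ∑ k ∈ Finset.range (n+1), d k * ((y (k+1))^2 - (y k)^2) := by
  obtain ⟨hσ1, hσ2⟩ := hσ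
  set z : ℝ := σ * y (n+1) + (1-σ) * y n with hz
  set a : ℕ → ℝ := fun k => (z - y k)^2 with ha
  have key : 2 * z * (∑ k ∈ Finset.range (n+1), d k * (y (k+1) - y k))
      - ∑ k ∈ Finset.range (n+1), d k * ((y (k+1))^2 - (y k)^2)
      = ∑ k ∈ Finset.range (n+1), d k * (a k - a (k+1)) := by
    rw [Finset.mul_sum, ← Finset.sum_sub_distrib]
    apply Finset.sum_congr rfl
    intro k _
    simp only [ha]
    ring
  rw [ge_iff_le, ← sub_nonneg, key, abel_aux]
  -- split off last term of the middle sum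
  obtain ⟨m, rfl⟩ : ∃ m, n = m + 1 := ⟨n - 1, (Nat.succ_pred_eq_of_pos hn).symm⟩
  rw [Finset.sum_range_succ]
  have hδ : ∀ k, a k = (z - y k)^2 := fun k => rfl
  set δ : ℝ := y (m+2) - y (m+1) with hδdef
  have han1 : a (m+1) = σ^2 * δ^2 := by
    simp only [ha, hz, hδdef]; ring
  have han2 : a (m+2) = (1-σ)^2 * δ^2 := by
    simp only [ha, hz, hδdef]; ring
  have h1 : 0 ≤ d 0 * a 0 := by
    have := hpos 0 (by omega)
    positivity
  have h2 : 0 ≤ ∑ k ∈ Finset.range m, (d (k+1) - d k) * a (k+1) := by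
    apply Finset.sum_nonneg
    intro k hk
    have hk' := Finset.mem_range.mp hk
    have := hmono k (by omega)
    have : 0 ≤ d (k+1) - d k := by linarith
    positivity
  have h3 : 0 ≤ (d (m+1) - d m) * a (m+1) - d (m+1) * a (m+2) := by
    rw [han1, han2]
    have hdm : 0 < d m := hpos m (by omega)
    have hlast' : 0 < (2*σ - 1) * d (m+1) - σ * d m := by
      simpa using hlast
    have hσ0 : (0:ℝ) < σ := by linarith
    have key2 : 0 ≤ (2*σ - 1) * d (m+1) - σ^2 * d m := by
      nlinarith [mul_pos hdm hσ0]
    nlinarith [mul_nonneg key2 (sq_nonneg δ)]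
  linarith

theorem stmt_15 (n : ℕ) (hn : 1 ≤ n) (σ : ℝ) (hσ : σ ∈ Set.Ioo (1/2 : ℝ) 1)
    (g1 g0 : ℕ → ℝ)
    (hshift : ∀ k, 2 ≤ k → k ≤ n → g1 k = g0 (k-1))
    (hpos1 : ∀ k ≤ n, 0 < g1 k) (hpos0 : ∀ k ≤ n - 1, 0 < g0 k)
    (hmono1 : ∀ k, k < n → g1 k < g1 (k+1))
    (hmono0 : ∀ k, k < n - 1 → g0 k < g0 (k+1))
    (hlast : 0 < (2*σ - 1) * g1 n - σ * g1 (n-1))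
    (v : ℕ → ℝ) (vm F : ℝ) :
    2 * (σ * v (n+1) + (1-σ) * v n)
        * ((g1 0 * (v 1 - vm) + ∑ k ∈ Finset.Icc 1 n, g1 k * (v (k+1) - v k)) - F)
      ≥ ∑ k ∈ Finset.range (n+1), g1 k * (v (k+1))^2
        - ∑ k ∈ Finset.range n, g0 k * (v (k+1))^2
        - (g1 1 - g0 0) * (v 1)^2
        - g1 0 * (vm + F / g1 0)^2 := by
  set y : ℕ → ℝ := fun k => if k = 0 then vm + F / g1 0 else v k with hy
  have hg10 : 0 < g1 0 := hpos1 0 (by omega)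
  have main := alikhanov n hn σ hσ g1 hpos1 hmono1 hlast y
  have hyk : ∀ k, y (k+1) = v (k+1) := by intro k; simp [hy]
  -- LHS sum rewriting
  have hL : ∑ k ∈ Finset.range (n+1), g1 k * (y (k+1) - y k)
      = (g1 0 * (v 1 - vm) + ∑ k ∈ Finset.Icc 1 n, g1 k * (v (k+1) - v k)) - F := by
    rw [Finset.sum_range_succ']
    have h0 : g1 0 * (y 1 - y 0) = g1 0 * (v 1 - vm) - F := by
      simp only [hy, one_ne_zero, ↓reduceIte]
      field_simp
      ring
    have hIcc : ∑ k ∈ Finset.Icc 1 n, g1 k * (v (k+1) - v k)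
        = ∑ k ∈ Finset.range n, g1 (k+1) * (y (k+2) - y (k+1)) := by
      rw [← Finset.Ico_add_one_right_eq_Icc, Finset.sum_Ico_eq_sum_range]
      apply Finset.sum_congr rfl
      intro k _
      rw [hyk, hyk]
      ring_nf
    rw [h0, hIcc]
    ring
  -- RHS sum rewriting
  have hR : ∑ k ∈ Finset.range (n+1), g1 k * ((y (k+1))^2 - (y k)^2)
      = ∑ k ∈ Finset.range (n+1), g1 k * (v (k+1))^2
        - ∑ k ∈ Finset.range n, g0 k * (v (k+1))^2
        - (g1 1 - g0 0) * (v 1)^2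
        - g1 0 * (vm + F / g1 0)^2 := by
    have hsplit : ∑ k ∈ Finset.range (n+1), g1 k * ((y (k+1))^2 - (y k)^2)
        = ∑ k ∈ Finset.range (n+1), g1 k * (v (k+1))^2
          - ∑ k ∈ Finset.range (n+1), g1 k * (y k)^2 := by
      rw [← Finset.sum_sub_distrib]
      apply Finset.sum_congr rfl
      intro k _
      rw [hyk]; ring
    rw [hsplit]
    have hT : ∑ k ∈ Finset.range (n+1), g1 k * (y k)^2
        = g1 0 * (vm + F / g1 0)^2 + (g1 1 - g0 0) * (v 1)^2
          + ∑ k ∈ Finset.range n, g0 k * (v (k+1))^2 := by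
      rw [Finset.sum_range_succ']
      have hy0 : y 0 = vm + F / g1 0 := by simp [hy]
      obtain ⟨m, rfl⟩ : ∃ m, n = m + 1 := ⟨n - 1, (Nat.succ_pred_eq_of_pos hn).symm⟩
      rw [Finset.sum_range_succ', Finset.sum_range_succ']
      have hmid : ∑ k ∈ Finset.range m, g1 (k+1+1) * (y (k+1+1))^2
          = ∑ k ∈ Finset.range m, g0 (k+1) * (v (k+1+1))^2 := by
        apply Finset.sum_congr rfl
        intro k hk
        have hk' := Finset.mem_range.mp hk
        rw [hshift (k+2) (by omega) (by omega), hyk]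
        norm_num
      rw [hmid, hy0, hyk]
      ring
    rw [hT]
    ring
  have hyn : y n = v n := by
    have : n ≠ 0 := by omega
    simp [hy, this]
  rw [hL, hR, hyk, hyn] at main
  exact main
end
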